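/- The boundary value problem u'''(t) = (1/18)(u'(t))² - (1/12)u(t)u''(t) + t/2 + 11/2 on (0,1) with u(0)=u'(1)=u''(1)=0 has a unique solution u satisfying 0 ≤ u(t) ≤ 4/3, 0 ≤ u'(t) ≤ 4, -8 ≤ u''(t) ≤ 0 on [0,1]; in particular u is nonnegative and increasing. -/

import Mathlib

/-- `u` solves the ODE of Example 4.3.1 on `(0,1)` with `u(0)=u'(1)=u''(1)=0`. -/
def IsSolution (u : ℝ → ℝ) : Prop :=
  ContDiff ℝ 2 u ∧
  (∀ t ∈ Set.Ioo (0:ℝ) 1,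
    HasDerivAt (deriv (deriv u))
      ((1 / 18) * (deriv u t) ^ 2 - (1 / 12) * u t * deriv (deriv u) t +
        t / 2 + 11 / 2) t) ∧
  u 0 = 0 ∧ deriv u 1 = 0 ∧ deriv (deriv u) 1 = 0

/-- bounds of Example 4.3.1. -/
def InBounds (u : ℝ → ℝ) : Prop :=
  ∀ t ∈ Set.Icc (0:ℝ) 1,
    u t ∈ Set.Icc 0 (4 / 3 : ℝ) ∧ deriv u t ∈ Set.Icc 0 (4 : ℝ) ∧
      deriv (deriv u) t ∈ Set.Icc (-8 : ℝ) 0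

namespace Ex431

noncomputable def U : ℝ → ℝ := fun t => t^3 - 3*t^2 + 3*t

lemma hU1 (t : ℝ) : HasDerivAt U (3*t^2 - 6*t + 3) t := by
  unfold U
  have h : HasDerivAt (fun t : ℝ => t^3 - 3*t^2 + 3*t)
      ((3:ℕ)*t^2 - 3*((2:ℕ)*t^1) + 3*1) t :=
    ((hasDerivAt_pow 3 t).sub ((hasDerivAt_pow 2 t).const_mul 3)).add
      ((hasDerivAt_id t).const_mul 3)
  convert h using 1; push_cast; ring

lemma hP2 (t : ℝ) : HasDerivAt (fun s : ℝ => 3*s^2 - 6*s + 3) (6*t - 6) t := by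
  have h : HasDerivAt (fun s : ℝ => 3*s^2 - 6*s + 3)
      (3*((2:ℕ)*t^1) - 6*1 + 0) t :=
    (((hasDerivAt_pow 2 t).const_mul 3).sub ((hasDerivAt_id t).const_mul 6)).add
      (hasDerivAt_const t 3)
  convert h using 1; push_cast; ring

lemma hP3 (t : ℝ) : HasDerivAt (fun s : ℝ => 6*s - 6) 6 t := by
  have h : HasDerivAt (fun s : ℝ => 6*s - 6) (6*1 - 0) t :=
    ((hasDerivAt_id t).const_mul 6).sub (hasDerivAt_const t 6)
  convert h using 1; ring

lemma derivU : deriv U = fun t => 3*t^2 - 6*t + 3 := funext fun t => (hU1 t).deriv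

lemma derivU2 : deriv (deriv U) = fun t => 6*t - 6 := by
  rw [derivU]; exact funext fun t => (hP2 t).deriv

lemma contDiffU : ContDiff ℝ 2 U := by unfold U; fun_prop

lemma regularity (v : ℝ → ℝ) (h : ContDiff ℝ 2 v) :
    Differentiable ℝ v ∧ Differentiable ℝ (deriv v) ∧ Continuous (deriv (deriv v)) := by
  have h2 : ContDiff ℝ ((1:ℕ∞)+1) v := by exact_mod_cast h
  rw [contDiff_succ_iff_deriv] at h2
  have h3 : ContDiff ℝ ((0:ℕ∞)+1) (deriv v) := by exact_mod_cast h2.2.2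
  rw [contDiff_succ_iff_deriv] at h3
  exact ⟨h2.1, h3.1, (contDiff_zero.mp (by exact_mod_cast h3.2.2))⟩

lemma isSolutionU : IsSolution U := by
  refine ⟨contDiffU, ?_, by norm_num [U], by rw [derivU]; norm_num, by rw [derivU2]; norm_num⟩
  intro t _
  have key : (1 / 18) * (deriv U t) ^ 2 - (1 / 12) * U t * deriv (deriv U) t +
      t / 2 + 11 / 2 = 6 := by
    rw [derivU2, derivU]
    simp only [U]
    ring
  rw [key, derivU2]; exact hP3 t

lemma inBoundsU : InBounds U := by
  intro t ht
  obtain ⟨h0, h1⟩ := ht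
  refine ⟨⟨?_, ?_⟩, ?_, ?_⟩
  · show (0:ℝ) ≤ t^3 - 3*t^2 + 3*t; nlinarith [sq_nonneg (t - 3/2), sq_nonneg t]
  · show t^3 - 3*t^2 + 3*t ≤ 4/3; nlinarith [sq_nonneg (1-t), mul_nonneg (mul_nonneg h0 h0) h0]
  · rw [derivU]
    constructor
    · show (0:ℝ) ≤ 3*t^2 - 6*t + 3; nlinarith [sq_nonneg (t-1)]
    · show 3*t^2 - 6*t + 3 ≤ 4; nlinarith [sq_nonneg t]
  · rw [derivU2]
    constructor
    · show (-8:ℝ) ≤ 6*t - 6; linarith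
    · show 6*t - 6 ≤ 0; linarith

lemma monoU : MonotoneOn U (Set.Icc (0:ℝ) 1) := by
  intro x hx y hy hxy
  show x^3 - 3*x^2 + 3*x ≤ y^3 - 3*y^2 + 3*y
  have hq : (0:ℝ) ≤ y^2 + x*y + x^2 - 3*x - 3*y + 3 := by
    nlinarith [sq_nonneg (x+y-2), sq_nonneg (x-1), sq_nonneg (y-1)]
  nlinarith [mul_nonneg (sub_nonneg.2 hxy) hq]

end Ex431

open Ex431

theorem example_431 :
    ∃ u : ℝ → ℝ, (IsSolution u ∧ InBounds u ∧
      (∀ t ∈ Set.Icc (0:ℝ) 1, 0 ≤ u t) ∧ MonotoneOn u (Set.Icc (0:ℝ) 1)) ∧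
      ∀ v : ℝ → ℝ, IsSolution v ∧ InBounds v → ∀ t ∈ Set.Icc (0:ℝ) 1, v t = u t := by
  refine ⟨U, ⟨isSolutionU, inBoundsU, fun t ht => (inBoundsU t ht).1.1, monoU⟩, ?_⟩
  rintro v ⟨hv, hvb⟩
  -- regularity of v
  obtain ⟨hvd, hv1d, hv2c⟩ := regularity v hv.1
  have hvc : Continuous v := hvd.continuous
  have hv1c : Continuous (deriv v) := hv1d.continuous
  -- abbreviations for the differences
  set w : ℝ → ℝ := fun s => v s - U s with hw
  set w1 : ℝ → ℝ := fun s => deriv v s - (3*s^2 - 6*s + 3) with hw1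
  set w2 : ℝ → ℝ := fun s => deriv (deriv v) s - (6*s - 6) with hw2
  have hwc : Continuous w := hvc.sub (by unfold U; fun_prop)
  have hw1c : Continuous w1 := hv1c.sub (by fun_prop)
  have hw2c : Continuous w2 := hv2c.sub (by fun_prop)
  have hwD : ∀ s, HasDerivAt w (w1 s) s := by
    intro s
    have := ((hvd s).hasDerivAt.sub (hU1 s))
    exact this
  have hw1D : ∀ s, HasDerivAt w1 (w2 s) s := by
    intro s
    exact ((hv1d s).hasDerivAt.sub (hP2 s))
  -- the forcing difference
  set g : ℝ → ℝ := fun s =>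
    ((1 / 18) * (deriv v s) ^ 2 - (1 / 12) * v s * deriv (deriv v) s + s / 2 + 11 / 2) - 6
    with hg
  have hgc : Continuous g := by
    apply Continuous.sub _ continuous_const
    fun_prop
  have hw2D : ∀ s ∈ Set.Ioo (0:ℝ) 1, HasDerivAt w2 (g s) s := by
    intro s hs
    exact (hv.2.1 s hs).sub (hP3 s)
  -- boundary values
  have hw0 : w 0 = 0 := by simp only [hw]; rw [hv.2.2.1]; norm_num [U]
  have hw11 : w1 1 = 0 := by simp only [hw1]; rw [hv.2.2.2.1]; norm_num
  have hw21 : w2 1 = 0 := by simp only [hw2]; rw [hv.2.2.2.2]; norm_num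
  -- maximum of |w2| on [0,1]
  obtain ⟨t₀, ht₀, hmax⟩ := (isCompact_Icc (a := (0:ℝ)) (b := 1)).exists_isMaxOn
    ⟨0, by norm_num⟩ (hw2c.abs.continuousOn)
  set C : ℝ := |w2 t₀| with hC
  have hC0 : 0 ≤ C := abs_nonneg _
  have hmax' : ∀ s ∈ Set.Icc (0:ℝ) 1, |w2 s| ≤ C := fun s hs => hmax hs
  -- FTC for w1 : w1 s = - ∫_s^1 w2
  have hw1eq : ∀ s : ℝ, w1 s = -(∫ x in s..1, w2 x) := by
    intro s
    have := intervalIntegral.integral_eq_sub_of_hasDerivAt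
      (f := w1) (f' := w2) (a := s) (b := 1)
      (fun x _ => hw1D x) (hw2c.intervalIntegrable s 1)
    rw [this, hw11]; ring
  -- FTC for w : w t = ∫_0^t w1
  have hweq : ∀ t : ℝ, w t = ∫ x in (0:ℝ)..t, w1 x := by
    intro t
    have := intervalIntegral.integral_eq_sub_of_hasDerivAt
      (f := w) (f' := w1) (a := 0) (b := t)
      (fun x _ => hwD x) (hw1c.intervalIntegrable 0 t)
    rw [this, hw0]; ring
  -- bound |w1 s| ≤ (1-s) C on [0,1]
  have hb1 : ∀ s ∈ Set.Icc (0:ℝ) 1, |w1 s| ≤ (1 - s) * C := by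
    rintro s ⟨hs0, hs1⟩
    rw [hw1eq s, abs_neg]
    have hb : ∀ x ∈ Set.uIoc s 1, ‖w2 x‖ ≤ C := by
      intro x hx
      rw [Set.uIoc_of_le hs1] at hx
      exact hmax' x ⟨le_trans hs0 (le_of_lt hx.1), hx.2⟩
    have := intervalIntegral.norm_integral_le_of_norm_le_const hb
    rw [Real.norm_eq_abs] at this
    calc |∫ x in s..1, w2 x| ≤ C * |1 - s| := this
      _ = (1 - s) * C := by rw [abs_of_nonneg (by linarith)]; ring
  -- bound |w s| ≤ C/2 on [0,1]
  have hb0 : ∀ s ∈ Set.Icc (0:ℝ) 1, |w s| ≤ C / 2 := by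
    rintro s ⟨hs0, hs1⟩
    rw [hweq s]
    have h1 : |∫ x in (0:ℝ)..s, w1 x| ≤ ∫ x in (0:ℝ)..s, |w1 x| := by
      simpa [Real.norm_eq_abs] using
        intervalIntegral.norm_integral_le_integral_norm (f := w1) (a := 0) (b := s) hs0
    have h2 : (∫ x in (0:ℝ)..s, |w1 x|) ≤ ∫ x in (0:ℝ)..s, (1 - x) * C := by
      apply intervalIntegral.integral_mono_on hs0
        (hw1c.abs.intervalIntegrable 0 s)
        ((by fun_prop : Continuous fun x : ℝ => (1 - x) * C).intervalIntegrable 0 s)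
      intro x hx
      exact hb1 x ⟨hx.1, le_trans hx.2 hs1⟩
    have h3 : (∫ x in (0:ℝ)..s, (1 - x) * C) = C * (s - s^2/2) := by
      have hF : ∀ x : ℝ, HasDerivAt (fun x : ℝ => C * (x - x^2/2)) ((1 - x) * C) x := by
        intro x
        have h : HasDerivAt (fun x : ℝ => C * (x - x^2/2))
            (C * (1 - (2:ℕ)*x^1/2)) x := by
          exact (((hasDerivAt_id x).sub ((hasDerivAt_pow 2 x).div_const 2)).const_mul C)
        convert h using 1; push_cast; ring
      rw [intervalIntegral.integral_eq_sub_of_hasDerivAt (fun x _ => hF x)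
        ((by fun_prop : Continuous fun x : ℝ => (1 - x) * C).intervalIntegrable 0 s)]
      ring
    have h4 : C * (s - s^2/2) ≤ C / 2 := by nlinarith [mul_nonneg hC0 (sq_nonneg (1 - s))]
    linarith
  -- structural identity for g
  have hgeq : ∀ s : ℝ, g s = (1/18) * (deriv v s + (3*s^2 - 6*s + 3)) * (w1 s)
      - (1/12) * (v s * w2 s + w s * (6*s - 6)) := by
    intro s
    simp only [hg, hw, hw1, hw2, U]
    ring
  clear_value w w1 w2 g
  -- bound |g| ≤ (3/4) C on [0,1]
  have hgb : ∀ s ∈ Set.Icc (0:ℝ) 1, |g s| ≤ (3/4) * C := by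
    intro s hs
    obtain ⟨hs0, hs1⟩ := hs
    obtain ⟨⟨hv0, hv0'⟩, ⟨hv1, hv1'⟩, ⟨hv2, hv2'⟩⟩ := hvb s ⟨hs0, hs1⟩
    have hw1b : |w1 s| ≤ C := le_trans (hb1 s ⟨hs0, hs1⟩)
      (by nlinarith)
    have hwb : |w s| ≤ C / 2 := hb0 s ⟨hs0, hs1⟩
    have hw2b : |w2 s| ≤ C := hmax' s ⟨hs0, hs1⟩
    have hA : |(deriv v s + (3*s^2 - 6*s + 3)) * (w1 s)| ≤ 7 * C := by
      rw [abs_mul]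
      have h1 : |deriv v s + (3*s^2 - 6*s + 3)| ≤ 7 := by
        rw [abs_le]; constructor <;> nlinarith [sq_nonneg (s-1)]
      exact mul_le_mul h1 hw1b (abs_nonneg _) (by norm_num)
    have hB : |v s * w2 s| ≤ (4/3) * C := by
      rw [abs_mul]
      have h1 : |v s| ≤ 4/3 := abs_le.mpr ⟨by linarith, hv0'⟩
      exact mul_le_mul h1 hw2b (abs_nonneg _) (by norm_num)
    have hD : |w s * (6*s - 6)| ≤ 3 * C := by
      rw [abs_mul]
      have h1 : |6*s - 6| ≤ 6 := by rw [abs_le]; constructor <;> linarith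
      have h2 : |w s| * |6*s - 6| ≤ (C/2) * 6 :=
        mul_le_mul hwb h1 (abs_nonneg _) (by linarith [abs_nonneg (w s)])
      linarith
    rw [hgeq s, abs_le]
    obtain ⟨hA1, hA2⟩ := abs_le.mp hA
    obtain ⟨hB1, hB2⟩ := abs_le.mp hB
    obtain ⟨hD1, hD2⟩ := abs_le.mp hD
    constructor <;> linarith
  -- FTC for w2 on [t₀, 1]
  have ht₀0 := ht₀.1
  have ht₀1 := ht₀.2
  have hw2eq : w2 t₀ = -(∫ x in t₀..1, g x) := by
    have := intervalIntegral.integral_eq_sub_of_hasDeriv_right_of_le ht₀1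
      (hw2c.continuousOn) (f' := g)
      (fun x hx => (hw2D x ⟨lt_of_le_of_lt ht₀0 hx.1, hx.2⟩).hasDerivWithinAt)
      (hgc.intervalIntegrable t₀ 1)
    rw [this, hw21]; ring
  -- contraction: C ≤ (3/4) C, hence C = 0
  have hCle : C ≤ (3/4) * C := by
    have hCeq : C = |∫ x in t₀..1, g x| := by rw [hC, hw2eq, abs_neg]
    have hb : ∀ x ∈ Set.uIoc t₀ 1, ‖g x‖ ≤ (3/4) * C := by
      intro x hx
      rw [Set.uIoc_of_le ht₀1] at hx
      exact hgb x ⟨le_trans ht₀0 (le_of_lt hx.1), hx.2⟩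
    have h := intervalIntegral.norm_integral_le_of_norm_le_const hb
    rw [Real.norm_eq_abs] at h
    calc C = |∫ x in t₀..1, g x| := hCeq
      _ ≤ (3/4)*C * |1 - t₀| := h
      _ ≤ (3/4) * C := by
          rw [abs_of_nonneg (by linarith)]
          nlinarith
  have hCz : C = 0 := le_antisymm (by linarith) hC0
  -- conclude
  intro t ht
  have := hb0 t ht
  rw [hCz] at this
  have : |w t| ≤ 0 := by linarith
  have hwt : w t = 0 := abs_eq_zero.mp (le_antisymm this (abs_nonneg _))
  rw [hw] at hwt
  have : v t - U t = 0 := hwt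
  linarith
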